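/- Let A be a unary NFA over {a} whose state set consists of an accepting initial state q0 together with k pairwise disjoint deterministic a-cycles C_1, …, C_k (each state of a cycle has exactly one outgoing a-transition, staying in its cycle), with exactly one a-transition from q0 into each cycle C_i, and with an arbitrary subset of the cycle states accepting. Let B be the NFA obtained from A by adding three new states t1, t2, t3 and the transitions (q0, a, t1), (q0, a, t2), (t2, a, t2), (t2, a, t3), where t1 and t3 are accepting and have no outgoing transitions. Then B accepts every word a^n (n ≥ 0), B is (k+1)-ambiguous, and the following are equivalent: (i) L(A) = {a^n : n ≥ 0} (A is universal); (ii) B is positively resolvable; (iii) B is 1/k-resolvable. -/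

import Mathlib

open scoped BigOperators

/-- A nondeterministic finite automaton over alphabet `σ` with states `Q`:
an initial state, a finite set of transitions and a finite set of accepting states. -/
structure NFA' (σ Q : Type) where
  init : Q
  trans : Finset (Q × σ × Q)
  accept : Finset Q

namespace NFA'

variable {σ Q : Type}

/-- `IsRun Δ p w ts r`: `ts` is a run on the word `w` from state `p` to state `r`,
using transitions from `Δ`. -/
inductive IsRun (Δ : Finset (Q × σ × Q)) : Q → List σ → List (Q × σ × Q) → Q → Prop
  | nil (q : Q) : IsRun Δ q [] [] q
  | cons {p : Q} {a : σ} {q r : Q} {w : List σ} {ts : List (Q × σ × Q)} :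
      (p, a, q) ∈ Δ → IsRun Δ q w ts r → IsRun Δ p (a :: w) ((p, a, q) :: ts) r

/-- `ts` is an accepting run of `A` on `w`. -/
def AccRun (A : NFA' σ Q) (w : List σ) (ts : List (Q × σ × Q)) : Prop :=
  ∃ r ∈ A.accept, IsRun A.trans A.init w ts r

/-- The language of `A`: words admitting an accepting run. -/
def lang (A : NFA' σ Q) : Set (List σ) := {w | ∃ ts, A.AccRun w ts}

/-- `δ(q, u)`: the set of states reachable from `q` by a run on `u`. -/
def reach (A : NFA' σ Q) (q : Q) (u : List σ) : Set Q :=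
  {r | ∃ ts, IsRun A.trans q u ts r}

/-- The word `u` admits an accepting run from the state `q`. -/
def AccFrom (A : NFA' σ Q) (q : Q) (u : List σ) : Prop :=
  ∃ r ∈ A.accept, ∃ ts, IsRun A.trans q u ts r

/-- `A_S`: the automaton `A` with transitions restricted to `S`. -/
def restrict (A : NFA' σ Q) (S : Finset (Q × σ × Q)) : NFA' σ Q :=
  { A with trans := S }

/-- `A` is `k`-ambiguous: every word has at most `k` accepting runs. -/
def kAmbiguous (A : NFA' σ Q) (k : ℕ) : Prop :=
  ∀ w, {ts | A.AccRun w ts}.encard ≤ (k : ℕ∞)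

/-- `A` is finitely-ambiguous. -/
def FinitelyAmbiguous (A : NFA' σ Q) : Prop := ∃ k : ℕ, 0 < k ∧ A.kAmbiguous k

/-- A memoryless stochastic resolver for `A`: probabilities, supported on the transitions
of `A`, summing to one over the outgoing transitions of every pair `(p, a)` that has at
least one outgoing transition (implicitly, `A` is completed with a non-accepting sink). -/
structure Resolver (A : NFA' σ Q) where
  r : Q × σ × Q → ℝ
  nonneg : ∀ t, 0 ≤ r t
  le_one : ∀ t, r t ≤ 1
  supp : ∀ t, r t ≠ 0 → t ∈ A.trans
  sum_one : ∀ p a, (∃ q, (p, a, q) ∈ A.trans) →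
      ∑ t ∈ A.trans, {t : Q × σ × Q | t.1 = p ∧ t.2.1 = a}.indicator r t = 1

/-- The probability of a run: the product of the probabilities of its transitions. -/
def runProb (f : Q × σ × Q → ℝ) (ts : List (Q × σ × Q)) : ℝ := (ts.map f).prod

/-- The acceptance probability of a word: the sum, over all accepting runs, of the
product of the transition probabilities along the run. -/
noncomputable def accProb (A : NFA' σ Q) (f : Q × σ × Q → ℝ) (w : List σ) : ℝ :=
  ∑ᶠ ts ∈ {ts | A.AccRun w ts}, runProb f ts

/-- `A` is `λ`-memoryless-stochastically-resolvable. -/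
def Resolvable (A : NFA' σ Q) (lam : ℝ) : Prop :=
  ∃ R : A.Resolver, {w | lam ≤ A.accProb R.r w} = A.lang

/-- `A` is positively (memoryless stochastically) resolvable. -/
def PositivelyResolvable (A : NFA' σ Q) : Prop :=
  ∃ lam : ℝ, 0 < lam ∧ A.Resolvable lam

/-- The support `S` is bad: no resolver whose support is exactly `S` witnesses
positive resolvability. -/
def BadSupport (A : NFA' σ Q) (S : Finset (Q × σ × Q)) : Prop :=
  ∀ R : A.Resolver, (∀ t, R.r t ≠ 0 ↔ t ∈ S) →
    ∀ lam : ℝ, 0 < lam → {w | lam ≤ A.accProb R.r w} ≠ A.lang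

/-- A transition is nondeterministic in `S`. -/
def NondetIn (S : Finset (Q × σ × Q)) (t : Q × σ × Q) : Prop :=
  t ∈ S ∧ ∃ q', q' ≠ t.2.2 ∧ (t.1, t.2.1, q') ∈ S

/-- The number of transitions of a run that are nondeterministic in `S`. -/
noncomputable def nondetCount (S : Finset (Q × σ × Q)) (ts : List (Q × σ × Q)) : ℕ :=
  (ts.map (Set.indicator {t | NondetIn S t} (fun _ => 1))).sum

/-- `b(w)`: the minimal number of `S`-nondeterministic transitions over all accepting
runs of `w` in `A_S`. -/
noncomputable def minNondet (A : NFA' σ Q) (S : Finset (Q × σ × Q)) (w : List σ) : ℕ :=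
  sInf {m | ∃ ts, (A.restrict S).AccRun w ts ∧ nondetCount S ts = m}

/-- The state of a run `ts` (started in `q0`) after `n` transitions. -/
def stateAt (q0 : Q) (ts : List (Q × σ × Q)) (n : ℕ) : Q :=
  match (ts.take n).getLast? with
  | some t => t.2.2
  | none => q0

/-- `Θ` makes `A` into a probabilistic finite automaton (PFA) based on `A`. -/
def IsPFA (A : NFA' σ Q) (Θ : Q × σ × Q → ℝ) : Prop :=
  (∀ t ∈ A.trans, 0 < Θ t ∧ Θ t ≤ 1) ∧ (∀ t, t ∉ A.trans → Θ t = 0) ∧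
  ∀ p a, (∃ q, (p, a, q) ∈ A.trans) →
    ∑ t ∈ A.trans, {t : Q × σ × Q | t.1 = p ∧ t.2.1 = a}.indicator Θ t = 1

/-- The PFA is simple: every transition has probability `1/2` or `1`. -/
def IsSimple (A : NFA' σ Q) (Θ : Q × σ × Q → ℝ) : Prop :=
  ∀ t ∈ A.trans, Θ t = 1/2 ∨ Θ t = 1

end NFA'

open NFA'

/-- The NFA `B` obtained from the unary NFA `A` by adding three new states
`t1, t2, t3` (= `inr 0, inr 1, inr 2`) with transitions `(q0,a,t1)`, `(q0,a,t2)`,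
`(t2,a,t2)`, `(t2,a,t3)`, where `t1` and `t3` are accepting with no outgoing
transitions. -/
def buildB {Q : Type} [DecidableEq Q] (A : NFA' Unit Q) : NFA' Unit (Q ⊕ Fin 3) where
  init := Sum.inl A.init
  trans :=
    (A.trans.image (fun t => (Sum.inl t.1, (), Sum.inl t.2.2))) ∪
      {(Sum.inl A.init, (), Sum.inr 0), (Sum.inl A.init, (), Sum.inr 1),
       (Sum.inr 1, (), Sum.inr 1), (Sum.inr 1, (), Sum.inr 2)}
  accept := (A.accept.image Sum.inl) ∪ {Sum.inr 0, Sum.inr 2}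

namespace StmtAux

set_option linter.unusedSectionVars false

variable {Q : Type} [DecidableEq Q]

abbrev T3 (Q : Type) := (Q ⊕ Fin 3) × Unit × (Q ⊕ Fin 3)

def loopT (Q : Type) : T3 Q := (Sum.inr 1, (), Sum.inr 1)
def exitT (Q : Type) : T3 Q := (Sum.inr 1, (), Sum.inr 2)

def detRun (f : Q → Q) : Q → ℕ → List (T3 Q)
  | _, 0 => []
  | q, (m+1) => (Sum.inl q, (), Sum.inl (f q)) :: detRun f (f q) m

def specialRun (A : NFA' Unit Q) : ℕ → List (T3 Q)
  | 0 => []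
  | 1 => [(Sum.inl A.init, (), Sum.inr 0)]
  | (m+2) => (Sum.inl A.init, (), Sum.inr 1) ::
      (List.replicate m (loopT Q) ++ [exitT Q])

def cycRun (A : NFA' Unit Q) (f : Q → Q) (e : Q) : ℕ → List (T3 Q)
  | 0 => []
  | (m+1) => (Sum.inl A.init, (), Sum.inl e) :: detRun f e m

lemma mem_buildB_trans (A : NFA' Unit Q) (t : T3 Q) :
    t ∈ (buildB A).trans ↔
      (∃ s ∈ A.trans, t = (Sum.inl s.1, (), Sum.inl s.2.2)) ∨
      t = (Sum.inl A.init, (), Sum.inr 0) ∨ t = (Sum.inl A.init, (), Sum.inr 1) ∨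
      t = loopT Q ∨ t = exitT Q := by
  show t ∈ _ ∪ _ ↔ _
  rw [Finset.mem_union, Finset.mem_image, Finset.mem_insert, Finset.mem_insert,
    Finset.mem_insert, Finset.mem_singleton]
  constructor
  · rintro (⟨s, hs, rfl⟩ | h | h | h | h)
    · exact Or.inl ⟨s, hs, rfl⟩
    · exact Or.inr (Or.inl h)
    · exact Or.inr (Or.inr (Or.inl h))
    · exact Or.inr (Or.inr (Or.inr (Or.inl h)))
    · exact Or.inr (Or.inr (Or.inr (Or.inr h)))
  · rintro (⟨s, hs, rfl⟩ | h | h | h | h)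
    · exact Or.inl ⟨s, hs, rfl⟩
    · exact Or.inr (Or.inl h)
    · exact Or.inr (Or.inr (Or.inl h))
    · exact Or.inr (Or.inr (Or.inr (Or.inl h)))
    · exact Or.inr (Or.inr (Or.inr (Or.inr h)))

lemma isRun_nil_inv {σ Q : Type} {Δ : Finset (Q × σ × Q)} {q r : Q} {ts : List (Q × σ × Q)}
    (h : IsRun Δ q [] ts r) : ts = [] ∧ r = q := by
  cases h; exact ⟨rfl, rfl⟩

lemma isRun_cons_inv {σ Q : Type} {Δ : Finset (Q × σ × Q)} {q r : Q} {a : σ} {w : List σ}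
    {ts : List (Q × σ × Q)} (h : IsRun Δ q (a :: w) ts r) :
    ∃ q' ts', (q, a, q') ∈ Δ ∧ ts = (q, a, q') :: ts' ∧ IsRun Δ q' w ts' r := by
  cases h with
  | cons hmem htail => exact ⟨_, _, hmem, rfl, htail⟩

lemma mem_buildB_accept (A : NFA' Unit Q) (r : Q ⊕ Fin 3) :
    r ∈ (buildB A).accept ↔
      (∃ q ∈ A.accept, r = Sum.inl q) ∨ r = Sum.inr 0 ∨ r = Sum.inr 2 := by
  show r ∈ _ ∪ _ ↔ _
  rw [Finset.mem_union, Finset.mem_image, Finset.mem_insert, Finset.mem_singleton]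
  constructor
  · rintro (⟨q, hq, rfl⟩ | h | h)
    · exact Or.inl ⟨q, hq, rfl⟩
    · exact Or.inr (Or.inl h)
    · exact Or.inr (Or.inr h)
  · rintro (⟨q, hq, rfl⟩ | h | h)
    · exact Or.inl ⟨q, hq, rfl⟩
    · exact Or.inr (Or.inl h)
    · exact Or.inr (Or.inr h)

lemma isRun_detRun (A : NFA' Unit Q) (f : Q → Q) (P : Q → Prop)
    (hf : ∀ q, P q → (q, (), f q) ∈ A.trans ∧ P (f q)) :
    ∀ m q, P q → IsRun (buildB A).trans (Sum.inl q) (List.replicate m ())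
      (detRun f q m) (Sum.inl (f^[m] q)) := by
  intro m
  induction m with
  | zero => intro q _; exact IsRun.nil _
  | succ m ih =>
    intro q hq
    rw [List.replicate_succ, Function.iterate_succ_apply]
    exact IsRun.cons ((mem_buildB_trans A _).2 (Or.inl ⟨(q, (), f q), (hf q hq).1, rfl⟩))
      (ih (f q) (hf q hq).2)

lemma loop_mem (A : NFA' Unit Q) : loopT Q ∈ (buildB A).trans :=
  (mem_buildB_trans A _).2 (Or.inr (Or.inr (Or.inr (Or.inl rfl))))

lemma exit_mem (A : NFA' Unit Q) : exitT Q ∈ (buildB A).trans :=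
  (mem_buildB_trans A _).2 (Or.inr (Or.inr (Or.inr (Or.inr rfl))))

lemma isRun_loops (A : NFA' Unit Q) :
    ∀ j : ℕ, IsRun (buildB A).trans (Sum.inr 1) (List.replicate (j+1) ())
      (List.replicate j (loopT Q) ++ [exitT Q]) (Sum.inr 2) := by
  intro j
  induction j with
  | zero =>
    rw [List.replicate_succ]
    exact IsRun.cons (exit_mem A) (IsRun.nil _)
  | succ j ih =>
    rw [List.replicate_succ (n := j + 1), List.replicate_succ (n := j)]
    exact IsRun.cons (loop_mem A) ih

lemma accRun_specialRun (A : NFA' Unit Q) (hq0acc : A.init ∈ A.accept) :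
    ∀ n, (buildB A).AccRun (List.replicate n ()) (specialRun A n) := by
  intro n
  match n with
  | 0 =>
    exact ⟨Sum.inl A.init, (mem_buildB_accept A _).2 (Or.inl ⟨A.init, hq0acc, rfl⟩),
      IsRun.nil _⟩
  | 1 =>
    refine ⟨Sum.inr 0, (mem_buildB_accept A _).2 (Or.inr (Or.inl rfl)), ?_⟩
    exact IsRun.cons ((mem_buildB_trans A _).2 (Or.inr (Or.inl rfl))) (IsRun.nil _)
  | (m+2) =>
    refine ⟨Sum.inr 2, (mem_buildB_accept A _).2 (Or.inr (Or.inr rfl)), ?_⟩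
    rw [List.replicate_succ]
    exact IsRun.cons ((mem_buildB_trans A _).2 (Or.inr (Or.inr (Or.inl rfl))))
      (isRun_loops A m)

lemma isRun_from_dead (A : NFA' Unit Q) (j : Fin 3) (hj : j ≠ 1) :
    ∀ (m : ℕ) (ts : List (T3 Q)) r,
      IsRun (buildB A).trans (Sum.inr j) (List.replicate m ()) ts r →
      m = 0 ∧ ts = [] ∧ r = Sum.inr j := by
  intro m ts r h
  cases m with
  | zero => obtain ⟨h1, h2⟩ := isRun_nil_inv h; exact ⟨rfl, h1, h2⟩
  | succ m =>
    rw [List.replicate_succ] at h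
    obtain ⟨q', ts', hmem, -, -⟩ := isRun_cons_inv h
    exfalso
    rcases (mem_buildB_trans A _).1 hmem with ⟨s, -, hs⟩ | hs | hs | hs | hs <;>
      have := congrArg Prod.fst hs <;> simp [loopT, exitT] at this <;> exact hj this

lemma isRun_from_t2 (A : NFA' Unit Q) :
    ∀ (m : ℕ) (ts : List (T3 Q)) r,
      IsRun (buildB A).trans (Sum.inr 1) (List.replicate m ()) ts r →
      (ts = List.replicate m (loopT Q) ∧ r = Sum.inr 1) ∨
      (∃ j, m = j + 1 ∧ ts = List.replicate j (loopT Q) ++ [exitT Q] ∧ r = Sum.inr 2) := by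
  intro m
  induction m with
  | zero =>
    intro ts r h
    obtain ⟨h1, h2⟩ := isRun_nil_inv h
    exact Or.inl ⟨by simp [h1], h2⟩
  | succ m ih =>
    intro ts r h
    rw [List.replicate_succ] at h
    obtain ⟨q', ts', hmem, hts, htail⟩ := isRun_cons_inv h
    rcases (mem_buildB_trans A _).1 hmem with ⟨s, -, hs⟩ | hs | hs | hs | hs
    · exact absurd (congrArg Prod.fst hs) (by simp)
    · exact absurd (congrArg Prod.fst hs) (by simp)
    · exact absurd (congrArg Prod.fst hs) (by simp)
    · -- loop
      have hq' : q' = Sum.inr 1 := by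
        have := congrArg (fun t => t.2.2) hs; simpa [loopT] using this
      subst hq'
      rcases ih ts' r htail with ⟨h1, h2⟩ | ⟨j, hj1, hj2, hj3⟩
      · exact Or.inl ⟨by simp [hts, h1, List.replicate_succ, loopT], h2⟩
      · refine Or.inr ⟨j + 1, by omega, ?_, hj3⟩
        rw [hts, hj2, List.replicate_succ]; rfl
    · -- exit
      have hq' : q' = Sum.inr 2 := by
        have := congrArg (fun t => t.2.2) hs; simpa [exitT] using this
      subst hq'
      obtain ⟨hm, hts', hr⟩ := isRun_from_dead A 2 (by decide) m ts' r htail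
      subst hm
      refine Or.inr ⟨0, rfl, ?_, hr⟩
      simp [hts, hts', exitT]

def detRunA (f : Q → Q) : Q → ℕ → List (Q × Unit × Q)
  | _, 0 => []
  | q, (m+1) => (q, (), f q) :: detRunA f (f q) m

lemma P_iterate (f : Q → Q) (P : Q → Prop) (hP : ∀ q, P q → P (f q)) :
    ∀ (j : ℕ) (q : Q), P q → P (f^[j] q) := by
  intro j
  induction j with
  | zero => intro q hq; exact hq
  | succ j ih =>
    intro q hq
    rw [Function.iterate_succ_apply]
    exact ih _ (hP q hq)

lemma isRun_cycle_inv (A : NFA' Unit Q) (f : Q → Q) (P : Q → Prop)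
    (hf : ∀ q, P q → (q, (), f q) ∈ A.trans ∧ P (f q) ∧
      ∀ r, (q, (), r) ∈ A.trans → r = f q)
    (hne : ∀ q, P q → q ≠ A.init) :
    ∀ (m : ℕ) (q : Q), P q → ∀ (ts : List (T3 Q)) r,
      IsRun (buildB A).trans (Sum.inl q) (List.replicate m ()) ts r →
      ts = detRun f q m ∧ r = Sum.inl (f^[m] q) := by
  intro m
  induction m with
  | zero =>
    intro q _ ts r h
    obtain ⟨h1, h2⟩ := isRun_nil_inv h
    exact ⟨h1, by simp [h2]⟩
  | succ m ih =>
    intro q hq ts r h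
    rw [List.replicate_succ] at h
    obtain ⟨q', ts', hmem, hts, htail⟩ := isRun_cons_inv h
    rcases (mem_buildB_trans A _).1 hmem with ⟨s, hsmem, hs⟩ | hs | hs | hs | hs
    · obtain ⟨s1, u, s2⟩ := s
      cases u
      simp only [Prod.mk.injEq] at hs
      obtain ⟨hq1, -, hq2⟩ := hs
      have hq1' : q = s1 := Sum.inl_injective hq1
      subst hq1'
      have hs2 : s2 = f q := (hf q hq).2.2 s2 hsmem
      subst hs2
      subst hq2
      obtain ⟨ih1, ih2⟩ := ih (f q) (hf q hq).2.1 ts' r htail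
      constructor
      · rw [hts, ih1]; rfl
      · rw [ih2, Function.iterate_succ_apply]
    · exact absurd (Sum.inl_injective (congrArg Prod.fst hs)) (hne q hq)
    · exact absurd (Sum.inl_injective (congrArg Prod.fst hs)) (hne q hq)
    · exact absurd (congrArg Prod.fst hs) (by simp [loopT])
    · exact absurd (congrArg Prod.fst hs) (by simp [exitT])

lemma accRun_classify (A : NFA' Unit Q) {k : ℕ} (C : Fin k → Finset Q)
    (f : Q → Q) (e : Fin k → Q)
    (hf : ∀ q, (∃ i, q ∈ C i) → (q, (), f q) ∈ A.trans ∧ (∃ i, f q ∈ C i) ∧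
      ∀ r, (q, (), r) ∈ A.trans → r = f q)
    (hq0notin : ∀ i, A.init ∉ C i)
    (hinto_uniq : ∀ i, ∀ q' ∈ C i, (A.init, (), q') ∈ A.trans → q' = e i)
    (htrans0 : ∀ q', (A.init, (), q') ∈ A.trans → ∃ i, q' ∈ C i) :
    ∀ (n : ℕ) (ts : List (T3 Q)), (buildB A).AccRun (List.replicate n ()) ts →
      ts = specialRun A n ∨ ∃ i, ts = cycRun A f (e i) n := by
  have hne : ∀ q, (∃ i, q ∈ C i) → q ≠ A.init := by
    rintro q ⟨i, hi⟩ rfl; exact hq0notin i hi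
  intro n ts hacc
  obtain ⟨r, hr, hrun⟩ := hacc
  cases n with
  | zero => exact Or.inl (isRun_nil_inv hrun).1
  | succ m =>
    rw [show (buildB A).init = Sum.inl A.init from rfl, List.replicate_succ] at hrun
    obtain ⟨q', ts', hmem, hts, htail⟩ := isRun_cons_inv hrun
    rcases (mem_buildB_trans A _).1 hmem with ⟨s, hsmem, hs⟩ | hs | hs | hs | hs
    · -- into a cycle
      obtain ⟨s1, u, s2⟩ := s
      cases u
      simp only [Prod.mk.injEq] at hs
      obtain ⟨hq1, -, hq2⟩ := hs
      have hq1' : (A.init : Q) = s1 := Sum.inl_injective hq1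
      subst hq1'
      obtain ⟨i, hi⟩ := htrans0 s2 hsmem
      have hs2 : s2 = e i := hinto_uniq i s2 hi hsmem
      subst hs2
      subst hq2
      have hPe : ∃ j, e i ∈ C j := ⟨i, hi⟩
      obtain ⟨h1, -⟩ := isRun_cycle_inv A f (fun q => ∃ j, q ∈ C j) hf hne m (e i) hPe ts' r htail
      refine Or.inr ⟨i, ?_⟩
      rw [hts, h1]; rfl
    · -- to t1
      have hq' : q' = Sum.inr 0 := congrArg (fun t => t.2.2) hs
      subst hq'
      obtain ⟨hm, hts', -⟩ := isRun_from_dead A 0 (by decide) m ts' r htail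
      subst hm
      left
      rw [hts, hts']
      rfl
    · -- to t2
      have hq' : q' = Sum.inr 1 := congrArg (fun t => t.2.2) hs
      subst hq'
      rcases isRun_from_t2 A m ts' r htail with ⟨-, h2⟩ | ⟨j, hj1, hj2, -⟩
      · exfalso
        subst h2
        rcases (mem_buildB_accept A _).1 hr with ⟨q, -, hq⟩ | hq | hq <;> simp at hq
      · left
        subst hj1
        rw [hts, hj2]
        rfl
    · exact absurd (congrArg Prod.fst hs) (by simp [loopT])
    · exact absurd (congrArg Prod.fst hs) (by simp [exitT])

lemma isRun_A_detRun (A : NFA' Unit Q) (f : Q → Q) (P : Q → Prop)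
    (hf : ∀ q, P q → (q, (), f q) ∈ A.trans ∧ P (f q)) :
    ∀ (m : ℕ) (q : Q), P q →
      IsRun A.trans q (List.replicate m ()) (detRunA f q m) (f^[m] q) := by
  intro m
  induction m with
  | zero => intro q _; exact IsRun.nil _
  | succ m ih =>
    intro q hq
    rw [List.replicate_succ, Function.iterate_succ_apply]
    exact IsRun.cons (hf q hq).1 (ih (f q) (hf q hq).2)

lemma isRun_A_cycle_inv (A : NFA' Unit Q) (f : Q → Q) (P : Q → Prop)
    (hf : ∀ q, P q → P (f q) ∧ ∀ r, (q, (), r) ∈ A.trans → r = f q) :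
    ∀ (m : ℕ) (q : Q), P q → ∀ (ts : List (Q × Unit × Q)) r,
      IsRun A.trans q (List.replicate m ()) ts r → r = f^[m] q := by
  intro m
  induction m with
  | zero => intro q _ ts r h; exact (isRun_nil_inv h).2
  | succ m ih =>
    intro q hq ts r h
    rw [List.replicate_succ] at h
    obtain ⟨q', ts', hmem, -, htail⟩ := isRun_cons_inv h
    have hq' : q' = f q := (hf q hq).2 q' hmem
    subst hq'
    rw [Function.iterate_succ_apply]
    exact ih (f q) (hf q hq).1 ts' r htail

lemma rtg_iterate (A : NFA' Unit Q) (f : Q → Q) (P : Q → Prop)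
    (hf : ∀ q, P q → P (f q) ∧ ∀ r, (q, (), r) ∈ A.trans → r = f q) :
    ∀ (q q' : Q), P q →
      Relation.ReflTransGen (fun p r => (p, (), r) ∈ A.trans) q q' →
      ∃ j, f^[j] q = q' := by
  intro q q' hq h
  induction h with
  | refl => exact ⟨0, rfl⟩
  | tail hstep hmem ih =>
    obtain ⟨j, rfl⟩ := ih
    have hP : P (f^[j] q) := P_iterate f P (fun q hq => (hf q hq).1) j q hq
    refine ⟨j + 1, ?_⟩
    rw [Function.iterate_succ_apply']
    exact ((hf _ hP).2 _ hmem).symm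

lemma lang_A_succ_iff (A : NFA' Unit Q) {k : ℕ} (C : Fin k → Finset Q)
    (f : Q → Q) (e : Fin k → Q)
    (hf : ∀ q, (∃ i, q ∈ C i) → (q, (), f q) ∈ A.trans ∧ (∃ i, f q ∈ C i) ∧
      ∀ r, (q, (), r) ∈ A.trans → r = f q)
    (he : ∀ i, e i ∈ C i)
    (hinto_mem : ∀ i, (A.init, (), e i) ∈ A.trans)
    (hinto_uniq : ∀ i, ∀ q' ∈ C i, (A.init, (), q') ∈ A.trans → q' = e i)
    (htrans0 : ∀ q', (A.init, (), q') ∈ A.trans → ∃ i, q' ∈ C i) (m : ℕ) :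
    List.replicate (m+1) () ∈ A.lang ↔ ∃ i, f^[m] (e i) ∈ A.accept := by
  constructor
  · rintro ⟨ts, r, hr, hrun⟩
    rw [List.replicate_succ] at hrun
    obtain ⟨q', ts', hmem, -, htail⟩ := isRun_cons_inv hrun
    obtain ⟨i, hi⟩ := htrans0 q' hmem
    have hq' : q' = e i := hinto_uniq i q' hi hmem
    subst hq'
    have := isRun_A_cycle_inv A f (fun q => ∃ i, q ∈ C i)
      (fun q hq => ⟨(hf q hq).2.1, (hf q hq).2.2⟩) m (e i) ⟨i, he i⟩ ts' r htail
    exact ⟨i, this ▸ hr⟩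
  · rintro ⟨i, hi⟩
    refine ⟨(A.init, (), e i) :: detRunA f (e i) m, f^[m] (e i), hi, ?_⟩
    rw [List.replicate_succ]
    exact IsRun.cons (hinto_mem i)
      (isRun_A_detRun A f (fun q => ∃ i, q ∈ C i)
        (fun q hq => ⟨(hf q hq).1, (hf q hq).2.1⟩) m (e i) ⟨i, he i⟩)

lemma runs_subset (A : NFA' Unit Q) {k : ℕ} (C : Fin k → Finset Q)
    (f : Q → Q) (e : Fin k → Q)
    (hf : ∀ q, (∃ i, q ∈ C i) → (q, (), f q) ∈ A.trans ∧ (∃ i, f q ∈ C i) ∧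
      ∀ r, (q, (), r) ∈ A.trans → r = f q)
    (hq0notin : ∀ i, A.init ∉ C i)
    (hinto_uniq : ∀ i, ∀ q' ∈ C i, (A.init, (), q') ∈ A.trans → q' = e i)
    (htrans0 : ∀ q', (A.init, (), q') ∈ A.trans → ∃ i, q' ∈ C i) (n : ℕ) :
    {ts | (buildB A).AccRun (List.replicate n ()) ts} ⊆
      insert (specialRun A n) (Set.range fun i => cycRun A f (e i) n) := by
  intro ts hts
  rcases accRun_classify A C f e hf hq0notin hinto_uniq htrans0 n ts hts with h | ⟨i, h⟩
  · exact Set.mem_insert_iff.2 (Or.inl h)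
  · exact Set.mem_insert_iff.2 (Or.inr ⟨i, h.symm⟩)

lemma encard_range_le {α : Type*} {k : ℕ} (g : Fin k → α) :
    (Set.range g).encard ≤ (k : ℕ∞) := by
  rw [← Set.image_univ]
  refine le_trans (Set.encard_image_le _ _) ?_
  rw [Set.encard_univ]
  simp

lemma finsum_mem_eq_toFinset_sum {α : Type*} (S : Set α) (hfin : S.Finite) (g : α → ℝ) :
    ∑ᶠ x ∈ S, g x = ∑ x ∈ hfin.toFinset, g x := by
  rw [← finsum_mem_coe_finset, Set.Finite.coe_toFinset]

lemma runProb_nonneg (f : (T3 Q) → ℝ) (hf : ∀ t, 0 ≤ f t) (ts : List (T3 Q)) :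
    0 ≤ runProb f ts := by
  apply List.prod_nonneg
  intro x hx
  obtain ⟨t, -, rfl⟩ := List.mem_map.1 hx
  exact hf t

lemma runProb_cons (f : (T3 Q) → ℝ) (t : T3 Q) (ts : List (T3 Q)) :
    runProb f (t :: ts) = f t * runProb f ts := by simp [runProb]

lemma runProb_special (A : NFA' Unit Q) (f : (T3 Q) → ℝ) (m : ℕ) :
    runProb f (specialRun A (m+2)) =
      f (Sum.inl A.init, (), Sum.inr 1) * (f (loopT Q))^m * f (exitT Q) := by
  simp [runProb, specialRun, List.map_append, List.map_replicate, List.prod_replicate,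
    mul_assoc]

lemma runProb_detRun (f : Q → Q) (g : (T3 Q) → ℝ)
    (P : Q → Prop) (hP : ∀ q, P q → P (f q))
    (hone : ∀ q, P q → g (Sum.inl q, (), Sum.inl (f q)) = 1) :
    ∀ (m : ℕ) (q : Q), P q → runProb g (detRun f q m) = 1 := by
  intro m
  induction m with
  | zero => intro q _; simp [runProb, detRun]
  | succ m ih =>
    intro q hq
    show runProb g ((Sum.inl q, (), Sum.inl (f q)) :: detRun f (f q) m) = 1
    rw [runProb_cons, hone q hq, ih (f q) (hP q hq), mul_one]

def specialsFinset (A : NFA' Unit Q) : Finset (T3 Q) :=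
  {(Sum.inl A.init, (), Sum.inr 0), (Sum.inl A.init, (), Sum.inr 1), loopT Q, exitT Q}

lemma buildB_sum (A : NFA' Unit Q) (g : T3 Q → ℝ) (p : Q ⊕ Fin 3) :
    ∑ t ∈ (buildB A).trans, ({t : T3 Q | t.1 = p ∧ t.2.1 = ()}.indicator g) t =
      (∑ s ∈ A.trans.filter (fun s => Sum.inl s.1 = p),
        g (Sum.inl s.1, (), Sum.inl s.2.2)) +
      ((if Sum.inl A.init = p then
          g (Sum.inl A.init, (), Sum.inr 0) + g (Sum.inl A.init, (), Sum.inr 1) else 0) +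
       (if (Sum.inr 1 : Q ⊕ Fin 3) = p then g (loopT Q) + g (exitT Q) else 0)) := by
  have hset : {t : T3 Q | t.1 = p ∧ t.2.1 = ()} = {t : T3 Q | t.1 = p} := by
    ext t; simp
  have hdisj : Disjoint (A.trans.image (fun t => (Sum.inl t.1, (), Sum.inl t.2.2)))
      (specialsFinset A) := by
    rw [Finset.disjoint_right]
    intro t ht hmem
    obtain ⟨s, -, hs⟩ := Finset.mem_image.1 hmem
    have := congrArg (fun x => x.2.2) hs
    simp only [specialsFinset, Finset.mem_insert, Finset.mem_singleton] at ht
    rcases ht with rfl | rfl | rfl | rfl <;> simp [loopT, exitT] at this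
  have htrans_eq : (buildB A).trans =
      (A.trans.image (fun t => (Sum.inl t.1, (), Sum.inl t.2.2))) ∪ specialsFinset A := rfl
  have hinj : ∀ x ∈ A.trans, ∀ y ∈ A.trans,
      (Sum.inl x.1, (), Sum.inl x.2.2) = ((Sum.inl y.1, (), Sum.inl y.2.2) : T3 Q) →
      x = y := by
    rintro ⟨x1, xu, x2⟩ - ⟨y1, yu, y2⟩ - h
    cases xu; cases yu
    simp only [Prod.mk.injEq] at h ⊢
    refine ⟨Sum.inl_injective h.1, trivial, Sum.inl_injective h.2.2⟩
  rw [hset, htrans_eq, Finset.sum_union hdisj]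
  congr 1
  · rw [Finset.sum_image hinj, Finset.sum_filter]
    refine Finset.sum_congr rfl fun s _ => ?_
    simp [Set.indicator_apply]
  · show ∑ t ∈ insert _ (insert _ (insert _ {exitT Q})), _ = _
    rw [Finset.sum_insert (by simp [loopT, exitT, Prod.ext_iff]),
      Finset.sum_insert (by simp [loopT, exitT, Prod.ext_iff]),
      Finset.sum_insert (by simp [loopT, exitT, Prod.ext_iff]), Finset.sum_singleton]
    simp only [Set.indicator_apply, Set.mem_setOf_eq, loopT, exitT]
    split_ifs <;> ring

noncomputable def baseR (A : NFA' Unit Q) (k : ℕ) : T3 Q → ℝ := fun t =>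
  if t ∈ (buildB A).trans then
    (if t.2.2.isLeft then (if t.1 = Sum.inl A.init then 1/(k:ℝ) else 1)
     else (if t = loopT Q then 1 else 0))
  else 0

lemma baseR_nonneg (A : NFA' Unit Q) (k : ℕ) (t : T3 Q) : 0 ≤ baseR A k t := by
  unfold baseR
  split_ifs <;> positivity

lemma baseR_le_one (A : NFA' Unit Q) {k : ℕ} (hk : 0 < k) (t : T3 Q) :
    baseR A k t ≤ 1 := by
  have h1 : 1/(k:ℝ) ≤ 1 := by
    rw [div_le_one (by exact_mod_cast hk)]
    exact_mod_cast hk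
  unfold baseR
  split_ifs
  all_goals first | exact h1 | norm_num

lemma baseR_supp (A : NFA' Unit Q) (k : ℕ) (t : T3 Q) (h : baseR A k t ≠ 0) :
    t ∈ (buildB A).trans := by
  by_contra hmem
  exact h (by unfold baseR; rw [if_neg hmem])

lemma baseR_image_init (A : NFA' Unit Q) (k : ℕ) {q' : Q}
    (h : (A.init, (), q') ∈ A.trans) :
    baseR A k (Sum.inl A.init, (), Sum.inl q') = 1/(k:ℝ) := by
  unfold baseR
  rw [if_pos ((mem_buildB_trans A _).2 (Or.inl ⟨(A.init, (), q'), h, rfl⟩))]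
  simp

lemma baseR_image_other (A : NFA' Unit Q) (k : ℕ) {q q' : Q}
    (h : (q, (), q') ∈ A.trans) (hne : q ≠ A.init) :
    baseR A k (Sum.inl q, (), Sum.inl q') = 1 := by
  unfold baseR
  rw [if_pos ((mem_buildB_trans A _).2 (Or.inl ⟨(q, (), q'), h, rfl⟩))]
  simp [hne]

lemma baseR_loop (A : NFA' Unit Q) (k : ℕ) : baseR A k (loopT Q) = 1 := by
  unfold baseR
  rw [if_pos (loop_mem A)]
  simp [loopT]

lemma baseR_exit (A : NFA' Unit Q) (k : ℕ) : baseR A k (exitT Q) = 0 := by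
  unfold baseR
  rw [if_pos (exit_mem A)]
  simp [exitT, loopT, Prod.ext_iff]

lemma baseR_t1 (A : NFA' Unit Q) (k : ℕ) :
    baseR A k (Sum.inl A.init, (), Sum.inr 0) = 0 := by
  unfold baseR
  rw [if_pos ((mem_buildB_trans A _).2 (Or.inr (Or.inl rfl)))]
  simp [loopT, Prod.ext_iff]

lemma baseR_t2 (A : NFA' Unit Q) (k : ℕ) :
    baseR A k (Sum.inl A.init, (), Sum.inr 1) = 0 := by
  unfold baseR
  rw [if_pos ((mem_buildB_trans A _).2 (Or.inr (Or.inr (Or.inl rfl))))]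
  simp [loopT, Prod.ext_iff]

lemma no_trans_dead (A : NFA' Unit Q) (j : Fin 3) (hj : j ≠ 1) (q' : Q ⊕ Fin 3) :
    ((Sum.inr j, (), q') : T3 Q) ∉ (buildB A).trans := by
  intro h
  rcases (mem_buildB_trans A _).1 h with ⟨s, -, hs⟩ | hs | hs | hs | hs <;>
    have := congrArg Prod.fst hs <;> simp [loopT, exitT] at this <;> exact hj this

lemma resolver_loop_exit (A : NFA' Unit Q) (R : (buildB A).Resolver) :
    R.r (loopT Q) + R.r (exitT Q) = 1 := by
  have h := R.sum_one (Sum.inr 1) () ⟨Sum.inr 1, loop_mem A⟩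
  rw [buildB_sum] at h
  rw [Finset.filter_false_of_mem (fun s _ => by simp), Finset.sum_empty,
    if_neg (by simp), if_pos rfl] at h
  linarith

lemma baseR_sum_one (A : NFA' Unit Q) {k : ℕ} (hk : 0 < k) (C : Fin k → Finset Q)
    (f : Q → Q) (e : Fin k → Q)
    (hf : ∀ q, (∃ i, q ∈ C i) → (q, (), f q) ∈ A.trans ∧ (∃ i, f q ∈ C i) ∧
      ∀ r, (q, (), r) ∈ A.trans → r = f q)
    (hq0notin : ∀ i, A.init ∉ C i)
    (he : ∀ i, e i ∈ C i)
    (hinto_mem : ∀ i, (A.init, (), e i) ∈ A.trans)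
    (hinto_uniq : ∀ i, ∀ q' ∈ C i, (A.init, (), q') ∈ A.trans → q' = e i)
    (htrans0 : ∀ q', (A.init, (), q') ∈ A.trans → ∃ i, q' ∈ C i)
    (hdisjC : ∀ i j, i ≠ j → Disjoint (C i) (C j))
    (hstates : ∀ q : Q, q = A.init ∨ ∃ i, q ∈ C i) :
    ∀ (p : Q ⊕ Fin 3) (a : Unit), (∃ q, (p, a, q) ∈ (buildB A).trans) →
      ∑ t ∈ (buildB A).trans,
        ({t : T3 Q | t.1 = p ∧ t.2.1 = a}.indicator (baseR A k)) t = 1 := by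
  intro p a hex
  cases a
  rw [buildB_sum]
  rcases p with q | j
  · rcases hstates q with rfl | ⟨i, hi⟩
    · -- q = init
      rw [if_pos rfl, if_neg (by simp)]
      have hfil : A.trans.filter (fun s => Sum.inl s.1 = (Sum.inl A.init : Q ⊕ Fin 3))
          = Finset.image (fun i => (A.init, (), e i)) Finset.univ := by
        ext s
        simp only [Finset.mem_filter, Finset.mem_image, Finset.mem_univ, true_and]
        constructor
        · rintro ⟨hmem, hq⟩
          obtain ⟨s1, u, s2⟩ := s
          cases u
          have hs1 : s1 = A.init := Sum.inl_injective hq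
          subst hs1
          obtain ⟨i, hi⟩ := htrans0 s2 hmem
          exact ⟨i, by rw [hinto_uniq i s2 hi hmem]⟩
        · rintro ⟨i, rfl⟩
          exact ⟨hinto_mem i, rfl⟩
      have hinj : ∀ x ∈ (Finset.univ : Finset (Fin k)), ∀ y ∈ Finset.univ,
          ((A.init, (), e x) : Q × Unit × Q) = (A.init, (), e y) → x = y := by
        rintro x - y - hxy
        by_contra hne
        have hexy : e x = e y := by
          have := congrArg (fun s => s.2.2) hxy
          exact this
        exact Finset.disjoint_left.1 (hdisjC x y hne) (he x) (hexy ▸ he y)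
      rw [hfil, Finset.sum_image hinj]
      have hval : ∀ i : Fin k,
          baseR A k (Sum.inl A.init, (), Sum.inl (e i)) = 1/(k:ℝ) :=
        fun i => baseR_image_init A k (hinto_mem i)
      rw [Finset.sum_congr rfl (fun i _ => hval i), Finset.sum_const,
        Finset.card_univ, Fintype.card_fin, baseR_t1, baseR_t2, nsmul_eq_mul]
      have hk' : (k:ℝ) ≠ 0 := by exact_mod_cast hk.ne'
      field_simp
      norm_num
    · -- q in cycle i
      have hqne : q ≠ A.init := fun h => hq0notin i (h ▸ hi)
      rw [if_neg (by simp [Ne.symm hqne]), if_neg (by simp)]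
      have hfil : A.trans.filter (fun s => Sum.inl s.1 = (Sum.inl q : Q ⊕ Fin 3))
          = {(q, (), f q)} := by
        ext s
        simp only [Finset.mem_filter, Finset.mem_singleton]
        constructor
        · rintro ⟨hmem, hq'⟩
          obtain ⟨s1, u, s2⟩ := s
          cases u
          have hs1 : s1 = q := Sum.inl_injective hq'
          have h2 : s2 = f q := (hf q ⟨i, hi⟩).2.2 s2 (hs1 ▸ hmem)
          simp [hs1, h2]
        · rintro rfl
          exact ⟨(hf q ⟨i, hi⟩).1, rfl⟩
      rw [hfil, Finset.sum_singleton]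
      rw [show baseR A k (Sum.inl q, (), Sum.inl (f q)) = 1 from
        baseR_image_other A k (hf q ⟨i, hi⟩).1 hqne]
      ring
  · by_cases hj : j = 1
    · subst hj
      rw [Finset.filter_false_of_mem (fun s _ => by simp), Finset.sum_empty,
        if_neg (by simp), if_pos rfl, baseR_loop, baseR_exit]
      ring
    · exact absurd hex (by rintro ⟨q', hq'⟩; exact no_trans_dead A j hj q' hq')

lemma isRun_end_eq {σ Q' : Type} {Δ : Finset (Q' × σ × Q')} :
    ∀ (ts : List (Q' × σ × Q')) (q : Q') (w w' : List σ) (r r' : Q'),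
      IsRun Δ q w ts r → IsRun Δ q w' ts r' → r = r' := by
  intro ts
  induction ts with
  | nil =>
    intro q w w' r r' h h'
    cases h; cases h'; rfl
  | cons t ts ih =>
    intro q w w' r r' h h'
    cases h with
    | cons hmem htail =>
      cases h' with
      | cons hmem' htail' => exact ih _ _ _ _ _ htail htail'

end StmtAux

/-- For a unary NFA `A` consisting of an accepting initial state `q0` feeding into `k`
pairwise disjoint deterministic cycles, the extended automaton `B` is universal,
`(k+1)`-ambiguous, and: `A` is universal iff `B` is positively resolvable iff `B` is
`1/k`-resolvable. -/
theorem stmt12 {Q : Type} [DecidableEq Q] (A : NFA' Unit Q) (k : ℕ) (hk : 0 < k)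
    (C : Fin k → Finset Q)
    -- the cycles are pairwise disjoint and do not contain the initial state
    (hdisj : ∀ i j, i ≠ j → Disjoint (C i) (C j))
    (hq0notin : ∀ i, A.init ∉ C i)
    -- the initial state is accepting
    (hq0acc : A.init ∈ A.accept)
    -- the state set is `{q0}` together with the cycles
    (hstates : ∀ q : Q, q = A.init ∨ ∃ i, q ∈ C i)
    -- each cycle state has exactly one outgoing transition, staying in its cycle
    (hdet : ∀ i, ∀ q ∈ C i, ∃ q' ∈ C i, (q, (), q') ∈ A.trans ∧
      ∀ r, (q, (), r) ∈ A.trans → r = q')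
    -- each cycle is a single cycle (strongly connected)
    (hconn : ∀ i, ∀ q ∈ C i, ∀ q' ∈ C i,
      Relation.ReflTransGen (fun p r => (p, (), r) ∈ A.trans) q q')
    -- exactly one transition from `q0` into each cycle
    (hinto : ∀ i, ∃ q ∈ C i, (A.init, (), q) ∈ A.trans ∧
      ∀ q' ∈ C i, (A.init, (), q') ∈ A.trans → q' = q)
    -- all transitions go from `q0` into a cycle or stay inside a cycle
    (htrans : ∀ t ∈ A.trans,
      (t.1 = A.init ∧ ∃ i, t.2.2 ∈ C i) ∨ (∃ i, t.1 ∈ C i ∧ t.2.2 ∈ C i)) :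
    (∀ n : ℕ, List.replicate n () ∈ (buildB A).lang) ∧
    (buildB A).kAmbiguous (k + 1) ∧
    ((∀ n : ℕ, List.replicate n () ∈ A.lang) ↔ (buildB A).PositivelyResolvable) ∧
    ((buildB A).PositivelyResolvable ↔ (buildB A).Resolvable (1 / (k : ℝ))) := by
  classical
  -- the deterministic successor function
  let f : Q → Q := fun q =>
    if h : ∃ q', (q, (), q') ∈ A.trans ∧ ∀ r, (q, (), r) ∈ A.trans → r = q'
    then h.choose else q
  have hfC : ∀ (i : Fin k) (q : Q), q ∈ C i →
      f q ∈ C i ∧ (q, (), f q) ∈ A.trans ∧ ∀ r, (q, (), r) ∈ A.trans → r = f q := by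
    intro i q hi
    obtain ⟨q', hq'C, hmem, huniq⟩ := hdet i q hi
    have hex : ∃ q'', (q, (), q'') ∈ A.trans ∧ ∀ r, (q, (), r) ∈ A.trans → r = q'' :=
      ⟨q', hmem, huniq⟩
    have hfq : f q = q' := by
      show (if h : ∃ q', (q, (), q') ∈ A.trans ∧ ∀ r, (q, (), r) ∈ A.trans → r = q'
        then h.choose else q) = q'
      rw [dif_pos hex]
      exact huniq _ hex.choose_spec.1
    rw [hfq]
    exact ⟨hq'C, hmem, huniq⟩
  have hf : ∀ q, (∃ i, q ∈ C i) → (q, (), f q) ∈ A.trans ∧ (∃ i, f q ∈ C i) ∧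
      ∀ r, (q, (), r) ∈ A.trans → r = f q := by
    rintro q ⟨i, hi⟩
    obtain ⟨h1, h2, h3⟩ := hfC i q hi
    exact ⟨h2, ⟨i, h1⟩, h3⟩
  -- the entry points
  let e : Fin k → Q := fun i => (hinto i).choose
  have he : ∀ i, e i ∈ C i := fun i => (hinto i).choose_spec.1
  have hinto_mem : ∀ i, (A.init, (), e i) ∈ A.trans :=
    fun i => (hinto i).choose_spec.2.1
  have hinto_uniq : ∀ i, ∀ q' ∈ C i, (A.init, (), q') ∈ A.trans → q' = e i :=
    fun i => (hinto i).choose_spec.2.2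
  have htrans0 : ∀ q', (A.init, (), q') ∈ A.trans → ∃ i, q' ∈ C i := by
    intro q' hmem
    rcases htrans _ hmem with ⟨-, i, hi⟩ | ⟨i, hi, -⟩
    · exact ⟨i, hi⟩
    · exact absurd hi (hq0notin i)
  have hrepl : ∀ w : List Unit, w = List.replicate w.length () :=
    fun w => List.eq_replicate_of_mem (fun b _ => Subsingleton.elim b ())
  -- Part 1: universality of B
  have part1 : ∀ n : ℕ, List.replicate n () ∈ (buildB A).lang :=
    fun n => ⟨StmtAux.specialRun A n, StmtAux.accRun_specialRun A hq0acc n⟩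
  have hlangB : (buildB A).lang = Set.univ := by
    apply Set.eq_univ_of_forall
    intro w
    rw [hrepl w]
    exact part1 _
  -- Part 2: (k+1)-ambiguity
  have part2 : (buildB A).kAmbiguous (k + 1) := by
    intro w
    rw [hrepl w]
    refine le_trans (Set.encard_mono
      (StmtAux.runs_subset A C f e hf hq0notin hinto_uniq htrans0 w.length)) ?_
    refine le_trans (Set.encard_insert_le _ _) ?_
    have h1 : (Set.range fun i => StmtAux.cycRun A f (e i) w.length).encard ≤ (k : ℕ∞) :=
      StmtAux.encard_range_le _
    calc (Set.range fun i => StmtAux.cycRun A f (e i) w.length).encard + 1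
        ≤ (k : ℕ∞) + 1 := add_le_add_left h1 1
      _ = ((k + 1 : ℕ) : ℕ∞) := by push_cast; rfl
  -- the resolver for the positive direction
  let R0 : (buildB A).Resolver :=
    { r := StmtAux.baseR A k
      nonneg := StmtAux.baseR_nonneg A k
      le_one := StmtAux.baseR_le_one A hk
      supp := StmtAux.baseR_supp A k
      sum_one := StmtAux.baseR_sum_one A hk C f e hf hq0notin he hinto_mem hinto_uniq
        htrans0 hdisj hstates }
  have hR0r : R0.r = StmtAux.baseR A k := rfl
  -- I1 : A universal → B is (1/k)-resolvable
  have hI1 : (∀ n : ℕ, List.replicate n () ∈ A.lang) →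
      (buildB A).Resolvable (1 / (k : ℝ)) := by
    intro huniv
    have hbound : ∀ n : ℕ, 1 / (k : ℝ) ≤ (buildB A).accProb R0.r (List.replicate n ()) := by
      intro n
      cases n with
      | zero =>
        have hset : {ts | (buildB A).AccRun (List.replicate 0 ()) ts}
            = {([] : List (StmtAux.T3 Q))} := by
          ext ts
          simp only [Set.mem_setOf_eq, Set.mem_singleton_iff]
          constructor
          · rintro ⟨r, hr, hrun⟩
            exact (StmtAux.isRun_nil_inv hrun).1
          · rintro rfl
            exact ⟨Sum.inl A.init,
              (StmtAux.mem_buildB_accept A _).2 (Or.inl ⟨A.init, hq0acc, rfl⟩),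
              IsRun.nil _⟩
        rw [accProb, hset, finsum_mem_singleton]
        show 1 / (k : ℝ) ≤ runProb R0.r []
        have : runProb R0.r [] = 1 := by simp [runProb]
        rw [this]
        rw [div_le_one (by exact_mod_cast hk)]
        exact_mod_cast hk
      | succ m =>
        obtain ⟨i, hi⟩ := (StmtAux.lang_A_succ_iff A C f e hf he hinto_mem hinto_uniq
          htrans0 m).1 (huniv (m + 1))
        have hcrAcc : (buildB A).AccRun (List.replicate (m + 1) ())
            (StmtAux.cycRun A f (e i) (m + 1)) := by
          refine ⟨Sum.inl (f^[m] (e i)),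
            (StmtAux.mem_buildB_accept A _).2 (Or.inl ⟨_, hi, rfl⟩), ?_⟩
          rw [List.replicate_succ]
          exact IsRun.cons
            ((StmtAux.mem_buildB_trans A _).2 (Or.inl ⟨(A.init, (), e i), hinto_mem i, rfl⟩))
            (StmtAux.isRun_detRun A f (fun q => ∃ i, q ∈ C i)
              (fun q hq => ⟨(hf q hq).1, (hf q hq).2.1⟩) m (e i) ⟨i, he i⟩)
        have hfin : {ts | (buildB A).AccRun (List.replicate (m + 1) ()) ts}.Finite :=
          Set.Finite.subset (Set.Finite.insert _ (Set.finite_range _))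
            (StmtAux.runs_subset A C f e hf hq0notin hinto_uniq htrans0 (m + 1))
        rw [accProb, StmtAux.finsum_mem_eq_toFinset_sum _ hfin]
        have hmem : StmtAux.cycRun A f (e i) (m + 1) ∈ hfin.toFinset :=
          hfin.mem_toFinset.2 hcrAcc
        have hval : runProb R0.r (StmtAux.cycRun A f (e i) (m + 1)) = 1 / (k : ℝ) := by
          show runProb (StmtAux.baseR A k)
            ((Sum.inl A.init, (), Sum.inl (e i)) :: StmtAux.detRun f (e i) m) = _
          rw [StmtAux.runProb_cons, StmtAux.runProb_detRun f _ (fun q => ∃ i, q ∈ C i)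
            (fun q hq => (hf q hq).2.1)
            (fun q hq => StmtAux.baseR_image_other A k (hf q hq).1
              (fun h => by obtain ⟨j, hj⟩ := hq; exact hq0notin j (h ▸ hj))) m (e i) ⟨i, he i⟩,
            StmtAux.baseR_image_init A k (hinto_mem i), mul_one]
        calc 1 / (k : ℝ) = runProb R0.r (StmtAux.cycRun A f (e i) (m + 1)) := hval.symm
          _ ≤ ∑ ts ∈ hfin.toFinset, runProb R0.r ts :=
            Finset.single_le_sum
              (fun ts _ => StmtAux.runProb_nonneg _ (StmtAux.baseR_nonneg A k) ts) hmem
    refine ⟨R0, ?_⟩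
    rw [hlangB]
    apply Set.eq_univ_of_forall
    intro w
    show 1 / (k : ℝ) ≤ (buildB A).accProb R0.r w
    rw [hrepl w]
    exact hbound _
  -- I2 : B positively resolvable → A universal
  have hI2 : (buildB A).PositivelyResolvable → ∀ n : ℕ, List.replicate n () ∈ A.lang := by
    rintro ⟨lam, hlam, R, hR⟩
    by_contra hcon
    push_neg at hcon
    obtain ⟨n, hn⟩ := hcon
    have hall : ∀ w : List Unit, lam ≤ (buildB A).accProb R.r w := by
      intro w
      have : w ∈ {w | lam ≤ (buildB A).accProb R.r w} := by
        rw [hR, hlangB]; trivial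
      exact this
    obtain ⟨m, rfl⟩ : ∃ m, n = m + 1 := by
      cases n with
      | zero => exact absurd ⟨[], A.init, hq0acc, IsRun.nil _⟩ hn
      | succ m => exact ⟨m, rfl⟩
    have hnot : ¬∃ i, f^[m] (e i) ∈ A.accept :=
      fun h => hn ((StmtAux.lang_A_succ_iff A C f e hf he hinto_mem hinto_uniq
        htrans0 m).2 h)
    -- periods of the cycles
    have hdex : ∀ i : Fin k, ∃ d, 1 ≤ d ∧ f^[d] (e i) = e i := by
      intro i
      have hrtg := hconn i (f (e i)) (hfC i _ (he i)).1 (e i) (he i)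
      obtain ⟨j, hj⟩ := StmtAux.rtg_iterate A f (fun q => ∃ i, q ∈ C i)
        (fun q hq => ⟨(hf q hq).2.1, (hf q hq).2.2⟩) (f (e i)) (e i)
        ⟨i, (hfC i _ (he i)).1⟩ hrtg
      exact ⟨j + 1, by omega, by rw [Function.iterate_succ_apply]; exact hj⟩
    choose d hd1 hd2 using hdex
    have hL1 : 1 ≤ ∏ i : Fin k, d i := Finset.one_le_prod' (fun i _ => hd1 i)
    set L := ∏ i : Fin k, d i with hLdef
    have hfixL : ∀ (i : Fin k) (t : ℕ), f^[t * L] (e i) = e i := by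
      intro i t
      obtain ⟨c, hc⟩ := Finset.dvd_prod_of_mem d (Finset.mem_univ i)
      rw [show t * L = d i * (c * t) by rw [hLdef, hc]; ring, Function.iterate_mul]
      exact Function.IsFixedPt.iterate (hd2 i) (c * t)
    have hnotP : ∀ t : ℕ, ¬∃ i, f^[m + t * L] (e i) ∈ A.accept := by
      rintro t ⟨i, hi⟩
      apply hnot
      refine ⟨i, ?_⟩
      rw [← hfixL i t, ← Function.iterate_add_apply]
      exact hi
    -- key estimate
    have hkey : ∀ t : ℕ, 1 ≤ t →
        lam ≤ R.r (Sum.inl A.init, (), Sum.inr 1) *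
          (R.r (StmtAux.loopT Q)) ^ (m + t * L - 1) * R.r (StmtAux.exitT Q) := by
      intro t ht
      have hM1 : 1 ≤ m + t * L := by
        have := Nat.mul_le_mul ht hL1
        omega
      set M := m + t * L with hM
      have hsub : {ts | (buildB A).AccRun (List.replicate (M + 1) ()) ts}
          ⊆ {StmtAux.specialRun A (M + 1)} := by
        intro ts hts
        rcases StmtAux.accRun_classify A C f e hf hq0notin hinto_uniq htrans0
          (M + 1) ts hts with h | ⟨i, h⟩
        · exact h
        · exfalso
          obtain ⟨r, hr, hrun⟩ := hts
          subst h
          have hrun2 : IsRun (buildB A).trans (Sum.inl A.init) (List.replicate (M + 1) ())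
              (StmtAux.cycRun A f (e i) (M + 1)) (Sum.inl (f^[M] (e i))) := by
            rw [show StmtAux.cycRun A f (e i) (M + 1)
              = (Sum.inl A.init, (), Sum.inl (e i)) :: StmtAux.detRun f (e i) M from rfl,
              List.replicate_succ]
            exact IsRun.cons
              ((StmtAux.mem_buildB_trans A _).2
                (Or.inl ⟨(A.init, (), e i), hinto_mem i, rfl⟩))
              (StmtAux.isRun_detRun A f (fun q => ∃ i, q ∈ C i)
                (fun q hq => ⟨(hf q hq).1, (hf q hq).2.1⟩) M (e i) ⟨i, he i⟩)
          have hreq : r = Sum.inl (f^[M] (e i)) :=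
            StmtAux.isRun_end_eq _ _ _ _ _ _ hrun hrun2
          subst hreq
          rcases (StmtAux.mem_buildB_accept A _).1 hr with ⟨q, hq, hq2⟩ | h0 | h0
          · exact hnotP t ⟨i, by rw [← hM, Sum.inl_injective hq2]; exact hq⟩
          · simp at h0
          · simp at h0
      have hfin : {ts | (buildB A).AccRun (List.replicate (M + 1) ()) ts}.Finite :=
        Set.Finite.subset (Set.finite_singleton _) hsub
      have hsubF : hfin.toFinset ⊆ {StmtAux.specialRun A (M + 1)} :=
        fun x hx => Finset.mem_singleton.2 (hsub (hfin.mem_toFinset.1 hx))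
      have hub : (buildB A).accProb R.r (List.replicate (M + 1) ())
          ≤ runProb R.r (StmtAux.specialRun A (M + 1)) := by
        rw [accProb, StmtAux.finsum_mem_eq_toFinset_sum _ hfin]
        refine le_trans (Finset.sum_le_sum_of_subset_of_nonneg hsubF
          (fun x _ _ => StmtAux.runProb_nonneg _ R.nonneg x)) ?_
        rw [Finset.sum_singleton]
      obtain ⟨M', hM'⟩ : ∃ M', M = M' + 1 := ⟨M - 1, by omega⟩
      have hval : runProb R.r (StmtAux.specialRun A (M + 1)) =
          R.r (Sum.inl A.init, (), Sum.inr 1) *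
            (R.r (StmtAux.loopT Q)) ^ (M - 1) * R.r (StmtAux.exitT Q) := by
        rw [show M + 1 = M' + 2 by omega, StmtAux.runProb_special,
          show M' = M - 1 by omega]
      calc lam ≤ (buildB A).accProb R.r (List.replicate (M + 1) ()) := hall _
        _ ≤ runProb R.r (StmtAux.specialRun A (M + 1)) := hub
        _ = _ := hval
    -- conclude
    have hsum := StmtAux.resolver_loop_exit A R
    have hsl0 : 0 ≤ R.r (StmtAux.loopT Q) := R.nonneg _
    have hsl1 : R.r (StmtAux.loopT Q) ≤ 1 := R.le_one _
    by_cases hseq : R.r (StmtAux.loopT Q) = 1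
    · have hu : R.r (StmtAux.exitT Q) = 0 := by rw [hseq] at hsum; linarith
      have := hkey 1 le_rfl
      rw [hu, mul_zero] at this
      linarith
    · have hslt : R.r (StmtAux.loopT Q) < 1 := lt_of_le_of_ne hsl1 hseq
      obtain ⟨j0, hj0⟩ := exists_pow_lt_of_lt_one hlam hslt
      have ht := hkey (j0 + 1) (by omega)
      have hexp : j0 ≤ m + (j0 + 1) * L - 1 := by
        have : (j0 + 1) * 1 ≤ (j0 + 1) * L := Nat.mul_le_mul_left _ hL1
        omega
      have hpow : (R.r (StmtAux.loopT Q)) ^ (m + (j0 + 1) * L - 1)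
          ≤ (R.r (StmtAux.loopT Q)) ^ j0 := pow_le_pow_of_le_one hsl0 hsl1 hexp
      have hp2 : R.r (Sum.inl A.init, (), Sum.inr 1) ≤ 1 := R.le_one _
      have hp20 : 0 ≤ R.r (Sum.inl A.init, (), Sum.inr 1) := R.nonneg _
      have hu1 : R.r (StmtAux.exitT Q) ≤ 1 := R.le_one _
      have hu0 : 0 ≤ R.r (StmtAux.exitT Q) := R.nonneg _
      set E := m + (j0 + 1) * L - 1
      have h1 : R.r (Sum.inl A.init, (), Sum.inr 1) * (R.r (StmtAux.loopT Q)) ^ E *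
          R.r (StmtAux.exitT Q) ≤
          R.r (Sum.inl A.init, (), Sum.inr 1) * (R.r (StmtAux.loopT Q)) ^ E :=
        mul_le_of_le_one_right (mul_nonneg hp20 (pow_nonneg hsl0 E)) hu1
      have h2 : R.r (Sum.inl A.init, (), Sum.inr 1) * (R.r (StmtAux.loopT Q)) ^ E
          ≤ (R.r (StmtAux.loopT Q)) ^ E :=
        mul_le_of_le_one_left (pow_nonneg hsl0 E) hp2
      linarith
  -- assemble
  refine ⟨part1, part2, ?_, ?_⟩
  · constructor
    · intro h
      exact ⟨1 / (k : ℝ), div_pos one_pos (by exact_mod_cast hk), hI1 h⟩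
    · exact fun h => hI2 h
  · constructor
    · intro h
      exact hI1 (hI2 h)
    · intro h
      exact ⟨1 / (k : ℝ), div_pos one_pos (by exact_mod_cast hk), h⟩
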